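/- arXiv:1008.2673 — 3 statements merged into one kernel-verified Lean document; each statement's English description precedes it below -/
import Mathlib

section
/- Let N = 1 + p + q + r and write points of ℂ^N as (z, u, v, w) ∈ ℂ × ℂ^p × ℂ^q × ℂ^r, so that ℍ^N = {(z,u,v,w) : Im z > |u|² + |v|² + |w|²}. Let λ > 1 be real, a = (a₁,…,a_r) ∈ ℂ^r, b ∈ ℂ, let D be a q×q diagonal matrix whose diagonal entries have modulus 1 and are different from 1, and let A = diag(λ₁, …, λ_r) with λ_j = exp(−u_j + i v_j), u_j > 0, v_j ∈ [0, 2π). Assume ψ(z,u,v,w) = (λz + 2i⟨w, a⟩ + b, √λ·u, √λ·Dv, √λ·Aw) is a self-map of ℍ^N. If Im(b) ≥ Σ_{j=1}^{r} ((λ − 1)/(2 u_j ln λ)) · (((ln λ)/2 + u_j)² + v_j²)/|λ − √λ·λ_j|² · |a_j|², then ψ can be embedded into a semigroup of holomorphic self-maps of ℍ^N. -/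
open Matrix Set Complex Filter

noncomputable section

/-- The Hermitian inner product `⟨x, y⟩ = ∑ j, x j * conj (y j)` on `ℂ^n`. -/
def herm {n : Type*} [Fintype n] (x y : n → ℂ) : ℂ :=
  ∑ j, x j * (starRingEnd ℂ) (y j)

/-- The squared Euclidean norm on `ℂ^n`. -/
def enormSq {n : Type*} [Fintype n] (x : n → ℂ) : ℝ :=
  ∑ j, ‖x j‖ ^ 2

/-- `(φ t)_{t ≥ 0}` is a (continuous) semigroup of holomorphic self-maps of `U`. -/
def IsHolSemigroupOn {E : Type*} [NormedAddCommGroup E] [NormedSpace ℂ E]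
    (U : Set E) (φ : ℝ → E → E) : Prop :=
  (∀ t : ℝ, 0 ≤ t → MapsTo (φ t) U U) ∧
  (∀ t : ℝ, 0 ≤ t → DifferentiableOn ℂ (φ t) U) ∧
  (∀ z ∈ U, φ 0 z = z) ∧
  (∀ s : ℝ, 0 ≤ s → ∀ t : ℝ, 0 ≤ t → ∀ z ∈ U, φ (s + t) z = φ s (φ t z)) ∧
  (∀ K : Set E, K ⊆ U → IsCompact K →
    TendstoUniformlyOn (fun t => φ t) id (nhdsWithin 0 (Ioi 0)) K)

/-- `ℂ^N = ℂ × ℂ^p × ℂ^q × ℂ^r`. -/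
abbrev E4 (p q r : ℕ) : Type := ℂ × (Fin p → ℂ) × (Fin q → ℂ) × (Fin r → ℂ)

/-- The Siegel half-plane `ℍ^N = {(z,u,v,w) : Im z > |u|² + |v|² + |w|²}`. -/
def Siegel4 (p q r : ℕ) : Set (E4 p q r) :=
  {x | enormSq x.2.1 + enormSq x.2.2.1 + enormSq x.2.2.2 < x.1.im}

lemma expInt (k : ℝ) (hk : k ≠ 0) (t : ℝ) :
    ∫ s in (0:ℝ)..t, Real.exp (k*s) = (Real.exp (k*t) - 1)/k := by
  have hD : ∀ s : ℝ, HasDerivAt (fun s : ℝ => Real.exp (k*s)/k) (Real.exp (k*s)) s := by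
    intro s
    have h0 : HasDerivAt (fun s : ℝ => k*s) k s := by simpa using (hasDerivAt_id s).const_mul k
    simpa [hk, mul_div_assoc] using h0.exp.div_const k
  rw [intervalIntegral.integral_eq_sub_of_hasDerivAt (fun s _ => hD s)
    ((Real.continuous_exp.comp (continuous_const.mul continuous_id)).intervalIntegrable 0 t)]
  simp [sub_div]

lemma csExp {A B t : ℝ} (hA : 0 < A) (hB : 0 < B) (ht : 0 ≤ t) :
    A*B*(Real.exp ((A+B)/2*t) - 1)^2 ≤
      ((A+B)/2)^2 * ((Real.exp (A*t) - 1) * (Real.exp (B*t) - 1)) := by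
  rcases ht.eq_or_lt with h|h
  · simp [← h]
  set c := (A+B)/2 with hc
  have hcpos : 0 < c := by positivity
  set IA := (Real.exp (A*t) - 1)/A with hIA
  set IB := (Real.exp (B*t) - 1)/B with hIB
  set IC := (Real.exp (c*t) - 1)/c with hIC
  have hIApos : 0 < IA := div_pos (by simp [sub_pos, Real.one_lt_exp_iff]; positivity) hA
  have key : ∀ θ : ℝ, 0 ≤ θ^2*IA + 2*θ*IC + IB := by
    intro θ
    have hnn : 0 ≤ ∫ s in (0:ℝ)..t, (θ*Real.exp (A*s/2) + Real.exp (B*s/2))^2 :=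
      intervalIntegral.integral_nonneg ht (fun s _ => sq_nonneg _)
    have hrw : ∀ s : ℝ, (θ*Real.exp (A*s/2) + Real.exp (B*s/2))^2
        = θ^2*Real.exp (A*s) + 2*θ*Real.exp (c*s) + Real.exp (B*s) := by
      intro s
      have e1 : Real.exp (A*s/2) * Real.exp (A*s/2) = Real.exp (A*s) := by
        rw [← Real.exp_add]; ring_nf
      have e2 : Real.exp (B*s/2) * Real.exp (B*s/2) = Real.exp (B*s) := by
        rw [← Real.exp_add]; ring_nf
      have e3 : Real.exp (A*s/2) * Real.exp (B*s/2) = Real.exp (c*s) := by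
        rw [← Real.exp_add]; rw [hc]; ring_nf
      rw [← e1, ← e2, ← e3]; ring
    have hint : (∫ s in (0:ℝ)..t, (θ*Real.exp (A*s/2) + Real.exp (B*s/2))^2)
        = θ^2*IA + 2*θ*IC + IB := by
      have hI1 : IntervalIntegrable (fun s => θ^2*Real.exp (A*s)) MeasureTheory.volume 0 t := by
        apply Continuous.intervalIntegrable; continuity
      have hI2 : IntervalIntegrable (fun s => 2*θ*Real.exp (c*s)) MeasureTheory.volume 0 t := by
        apply Continuous.intervalIntegrable; continuity
      have hI3 : IntervalIntegrable (fun s => Real.exp (B*s)) MeasureTheory.volume 0 t := by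
        apply Continuous.intervalIntegrable; continuity
      rw [intervalIntegral.integral_congr (g := fun s =>
          θ^2*Real.exp (A*s) + 2*θ*Real.exp (c*s) + Real.exp (B*s)) (fun s _ => hrw s),
        intervalIntegral.integral_add (hI1.add hI2) hI3,
        intervalIntegral.integral_add hI1 hI2,
        intervalIntegral.integral_const_mul, intervalIntegral.integral_const_mul,
        expInt A hA.ne' t, expInt B hB.ne' t, expInt c hcpos.ne' t]
    linarith [hnn, hint.symm.le]
  have h2 := key (-IC/IA)
  have hIC2 : IC^2 ≤ IA*IB := by
    have hexp : (-IC/IA)^2*IA + 2*(-IC/IA)*IC + IB = IB - IC^2/IA := by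
      field_simp; ring
    rw [hexp] at h2
    rw [sub_nonneg, div_le_iff₀ hIApos] at h2
    linarith [h2]
  have hfin : ((Real.exp (c*t)-1)/c)^2 ≤ ((Real.exp (A*t)-1)/A) * ((Real.exp (B*t)-1)/B) := hIC2
  rw [div_pow, div_mul_div_comm, div_le_div_iff₀ (by positivity) (by positivity)] at hfin
  calc A*B*(Real.exp (c*t) - 1)^2 = (Real.exp (c*t)-1)^2 * (A*B) := by ring
    _ ≤ (Real.exp (A*t)-1)*(Real.exp (B*t)-1)*c^2 := hfin
    _ = c^2 * ((Real.exp (A*t)-1)*(Real.exp (B*t)-1)) := by ring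

lemma cexpBound (γ : ℂ) (hγ : 0 < γ.re) (t : ℝ) (ht : 0 ≤ t) :
    ‖Complex.exp ((t:ℂ)*γ) - 1‖ ≤ ‖γ‖ * ((Real.exp (γ.re*t) - 1)/γ.re) := by
  have hD : ∀ s : ℝ, HasDerivAt (fun s : ℝ => Complex.exp ((s:ℂ)*γ))
      (Complex.exp ((s:ℂ)*γ) * γ) s := by
    intro s
    have h0 : HasDerivAt (fun s : ℝ => (s:ℂ)*γ) γ s := by
      simpa using (Complex.ofRealCLM.hasDerivAt (x := s)).mul_const γ
    exact h0.cexp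
  have hcont : Continuous (fun s : ℝ => Complex.exp ((s:ℂ)*γ) * γ) := by continuity
  have hFTC : (∫ s in (0:ℝ)..t, Complex.exp ((s:ℂ)*γ) * γ)
      = Complex.exp ((t:ℂ)*γ) - 1 := by
    rw [intervalIntegral.integral_eq_sub_of_hasDerivAt (fun s _ => hD s)
      (hcont.intervalIntegrable 0 t)]
    simp
  rw [← hFTC]
  calc ‖∫ s in (0:ℝ)..t, Complex.exp ((s:ℂ)*γ) * γ‖
      ≤ ∫ s in (0:ℝ)..t, ‖Complex.exp ((s:ℂ)*γ) * γ‖ :=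
        intervalIntegral.norm_integral_le_integral_norm ht
    _ = ∫ s in (0:ℝ)..t, Real.exp (γ.re*s) * ‖γ‖ := by
        apply intervalIntegral.integral_congr
        intro s _
        simp [Complex.norm_exp, mul_comm]
    _ = (Real.exp (γ.re*t) - 1)/γ.re * ‖γ‖ := by
        rw [intervalIntegral.integral_mul_const, expInt γ.re hγ.ne' t]
    _ = ‖γ‖ * ((Real.exp (γ.re*t) - 1)/γ.re) := by ring

lemma quadNN {aq C X tB : ℝ} (ha : 0 ≤ aq) (hC : 0 ≤ C) (hX : 0 ≤ X) (htB : 0 ≤ tB)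
    (hdisc : C^2 ≤ 4*aq*tB) : 0 ≤ aq*X^2 - C*X + tB := by
  rcases ha.eq_or_lt with h|h
  · have hC0 : C = 0 := by nlinarith
    simp [hC0]
    nlinarith
  · nlinarith [sq_nonneg (2*aq*X - C)]

set_option maxHeartbeats 4000000 in
/-- Let `ψ(z,u,v,w) = (λz + 2i⟨w,a⟩ + b, √λ u, √λ Dv, √λ Aw)` be a hyperbolic
self-map of `ℍ^N` with `λ > 1`, `D` diagonal unimodular without the entry `1`,
and `A = diag(λ₁, …, λ_r)`, `λ_j = exp(-u_j + i v_j)`, `u_j > 0`, `v_j ∈ [0, 2π)`.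
If `Im b ≥ ∑_j ((λ-1)/(2 u_j ln λ)) ((ln λ/2 + u_j)² + v_j²)/|λ - √λ λ_j|² |a_j|²`,
then `ψ` embeds into a semigroup of holomorphic self-maps of `ℍ^N`. -/
theorem stmt15 {p q r : ℕ} (lam : ℝ) (hlam : 1 < lam)
    (a : Fin r → ℂ) (b : ℂ)
    (e : Fin q → ℂ) (he : ∀ j, ‖e j‖ = 1) (he1 : ∀ j, e j ≠ 1)
    (uu vv : Fin r → ℝ) (huu : ∀ j, 0 < uu j)
    (hvv : ∀ j, vv j ∈ Ico (0 : ℝ) (2 * Real.pi))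
    (d : Fin r → ℂ)
    (hd : ∀ j, d j = Complex.exp (-(uu j : ℂ) + (vv j : ℂ) * Complex.I))
    (ψ : E4 p q r → E4 p q r)
    (hψ : ∀ x, ψ x = ((lam : ℂ) * x.1 + 2 * Complex.I * herm x.2.2.2 a + b,
      (Real.sqrt lam : ℂ) • x.2.1,
      (Real.sqrt lam : ℂ) • (Matrix.diagonal e).mulVec x.2.2.1,
      (Real.sqrt lam : ℂ) • (Matrix.diagonal d).mulVec x.2.2.2))
    (hself : MapsTo ψ (Siegel4 p q r) (Siegel4 p q r))
    (hb : b.im ≥ ∑ j : Fin r,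
      ((lam - 1) / (2 * uu j * Real.log lam)) *
        (((Real.log lam / 2 + uu j) ^ 2 + vv j ^ 2) /
          ‖(lam : ℂ) - (Real.sqrt lam : ℂ) * d j‖ ^ 2) * ‖a j‖ ^ 2) :
    ∃ φt : ℝ → E4 p q r → E4 p q r,
      IsHolSemigroupOn (Siegel4 p q r) φt ∧ ∀ z ∈ Siegel4 p q r, φt 1 z = ψ z := by
  have hlam0 : (0:ℝ) < lam := by linarith
  set L : ℝ := Real.log lam with hLdef
  have hL : 0 < L := Real.log_pos hlam
  have hexpL : Real.exp L = lam := Real.exp_log hlam0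
  have hsqrt : Real.sqrt lam = Real.exp (L/2) := by
    have h2 : Real.exp (L/2) ^ 2 = lam := by
      rw [sq, ← Real.exp_add]; rw [show L/2 + L/2 = L by ring]; exact hexpL
    rw [← h2, Real.sqrt_sq (Real.exp_nonneg _)]
  set β : Fin r → ℂ := fun j => ((L/2 - uu j : ℝ) : ℂ) + (vv j : ℂ) * Complex.I with hβdef
  have hβre : ∀ j, (β j).re = L/2 - uu j := by intro j; simp [hβdef]
  have hβexp : ∀ j, (Real.sqrt lam : ℂ) * d j = Complex.exp (β j) := by
    intro j
    rw [hd, hsqrt, Complex.ofReal_exp, ← Complex.exp_add]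
    congr 1
    push_cast [hβdef]
    ring
  have hden : ∀ j, (lam : ℂ) - Complex.exp (β j) ≠ 0 := by
    intro j h
    rw [sub_eq_zero] at h
    have h1 : ‖((lam:ℝ) : ℂ)‖ = lam := by
      simp [Complex.norm_real, abs_of_pos hlam0]
    have h2 : ‖Complex.exp (β j)‖ = Real.exp (L/2 - uu j) := by
      rw [Complex.norm_exp, hβre]
    have h3 : Real.exp (L/2 - uu j) < Real.exp L := by
      apply Real.exp_lt_exp.mpr; have := huu j; linarith
    rw [h, h2] at h1
    rw [← hexpL] at h1
    linarith [h3, h1.le, h1.ge]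
  set κ : Fin r → ℂ := fun j =>
    2 * Complex.I * (starRingEnd ℂ) (a j) / ((lam : ℂ) - Complex.exp (β j)) with hκdef
  set φ : ℝ → E4 p q r → E4 p q r := fun t x =>
    (Complex.exp ((t:ℂ) * (L:ℂ)) * x.1
        + (∑ j, κ j * (Complex.exp ((t:ℂ) * (L:ℂ)) - Complex.exp ((t:ℂ) * β j)) * x.2.2.2 j)
        + b * (Complex.exp ((t:ℂ) * (L:ℂ)) - 1) / ((lam : ℂ) - 1),
      fun i => Complex.exp ((t:ℂ) * ((L:ℂ)/2)) * x.2.1 i,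
      fun j => Complex.exp ((t:ℂ) * ((L:ℂ)/2 + Complex.log (e j))) * x.2.2.1 j,
      fun j => Complex.exp ((t:ℂ) * β j) * x.2.2.2 j) with hφdef
  refine ⟨φ, ⟨?_, ?_, ?_, ?_, ?_⟩, ?_⟩
  · -- MapsTo
    intro t ht x hx
    simp only [Siegel4, mem_setOf_eq] at hx
    simp only [hφdef, Siegel4, mem_setOf_eq]
    have hlamne : lam - 1 ≠ 0 := by linarith
    set T := Real.exp (L*t) with hTdef
    have hTpos : 0 < T := Real.exp_pos _
    have hT1 : 1 ≤ T := Real.one_le_exp (by positivity)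
    set τ := (T - 1)/(lam - 1) with hτdef
    have hτnn : 0 ≤ τ := by
      apply div_nonneg (by linarith) (by linarith)
    -- rewrite the exponentials as real
    have hTc : Complex.exp ((t:ℂ)*(L:ℂ)) = ((T:ℝ):ℂ) := by
      rw [hTdef, Complex.ofReal_exp]
      congr 1
      push_cast
      ring
    -- norms of component multipliers
    have hnu : enormSq (fun i => Complex.exp ((t:ℂ)*((L:ℂ)/2)) * x.2.1 i)
        = T * enormSq x.2.1 := by
      simp only [enormSq, norm_mul, mul_pow]
      rw [← Finset.mul_sum]
      congr 1
      rw [Complex.norm_exp]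
      have hre : ((t:ℂ)*((L:ℂ)/2)).re = t*(L/2) := by simp
      rw [hre, pow_two, ← Real.exp_add, show t*(L/2) + t*(L/2) = L*t by ring]
    have hnv : enormSq (fun j => Complex.exp ((t:ℂ)*((L:ℂ)/2 + Complex.log (e j))) * x.2.2.1 j)
        = T * enormSq x.2.2.1 := by
      have hnorm : ∀ j, ‖Complex.exp ((t:ℂ)*((L:ℂ)/2 + Complex.log (e j)))‖^2 = T := by
        intro j
        rw [Complex.norm_exp]
        have hre0 : (Complex.log (e j)).re = 0 := by
          rw [Complex.log_re, he j, Real.log_one]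
        have hre : ((t:ℂ)*((L:ℂ)/2 + Complex.log (e j))).re = t*(L/2) := by
          simp [Complex.mul_re, Complex.add_re, hre0]
        rw [hre, pow_two, ← Real.exp_add, show t*(L/2) + t*(L/2) = L*t by ring]
      simp only [enormSq, norm_mul, mul_pow]
      rw [Finset.mul_sum]
      exact Finset.sum_congr rfl (fun j _ => by rw [hnorm j])
    set P : Fin r → ℝ := fun j => Real.exp ((L - 2*uu j)*t) with hPdef
    have hnw : ∀ j, ‖Complex.exp ((t:ℂ)*β j) * x.2.2.2 j‖^2 = P j * ‖x.2.2.2 j‖^2 := by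
      intro j
      rw [norm_mul, mul_pow]
      congr 1
      rw [Complex.norm_exp]
      have hre : ((t:ℂ)*β j).re = t*(L/2 - uu j) := by simp [hβdef]
      rw [hre, pow_two, ← Real.exp_add, hPdef,
        show t*(L/2 - uu j) + t*(L/2 - uu j) = (L - 2*uu j)*t by ring]
    -- per-index inequality
    set B : Fin r → ℝ := fun j => (lam - 1) / (2 * uu j * L) *
        (((L / 2 + uu j) ^ 2 + vv j ^ 2) / ‖(lam:ℂ) - (Real.sqrt lam : ℂ) * d j‖ ^ 2)
        * ‖a j‖ ^ 2 with hBdef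
    have hBnn : ∀ j, 0 ≤ B j := by
      intro j
      rw [hBdef]
      have h1 := huu j
      have h2 : (0:ℝ) ≤ lam - 1 := by linarith
      positivity
    have claim : ∀ j, P j * ‖x.2.2.2 j‖^2 ≤ T * ‖x.2.2.2 j‖^2
        + (κ j * (Complex.exp ((t:ℂ)*(L:ℂ)) - Complex.exp ((t:ℂ)*β j)) * x.2.2.2 j).im
        + τ * B j := by
      intro j
      have hu2 : 0 < uu j := huu j
      set u2 := uu j with hu2def
      set v2 := vv j with hv2def
      set c := L/2 + u2 with hcdef
      have hcpos : 0 < c := by positivity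
      set M := c^2 + v2^2 with hMdef
      have hMnn : 0 ≤ M := by positivity
      set Dn := ‖(lam:ℂ) - Complex.exp (β j)‖ with hDndef
      have hDnpos : 0 < Dn := norm_pos_iff.mpr (hden j)
      set α := ‖a j‖ with hαdef
      have hαnn : 0 ≤ α := norm_nonneg _
      set X := ‖x.2.2.2 j‖ with hXdef
      set Δ := Complex.exp ((t:ℂ)*(L:ℂ)) - Complex.exp ((t:ℂ)*β j) with hΔdef
      set γ := (L:ℂ) - β j with hγdef
      have hγre : γ.re = c := by
        simp only [hγdef, hβdef, Complex.sub_re, Complex.ofReal_re, Complex.add_re,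
          Complex.mul_re, Complex.I_re, Complex.I_im, Complex.ofReal_im]
        ring
      have hγim : γ.im = -v2 := by
        simp [hγdef, hβdef]
        exact hv2def.symm
      have hγnorm : ‖γ‖ = Real.sqrt M := by
        rw [Complex.norm_def, Complex.normSq_apply, hγre, hγim]
        congr 1
        rw [hMdef]
        ring
      have harg : (t:ℂ)*β j + (t:ℂ)*γ = (t:ℂ)*(L:ℂ) := by
        rw [hγdef]; ring
      have hΔfac : Δ = Complex.exp ((t:ℂ)*β j) * (Complex.exp ((t:ℂ)*γ) - 1) := by
        rw [hΔdef, mul_sub, mul_one, ← Complex.exp_add, harg]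
      have hβnorm : ‖Complex.exp ((t:ℂ)*β j)‖ = Real.exp (t*(L/2 - u2)) := by
        rw [Complex.norm_exp]
        congr 1
        simp [hβdef]
        exact Or.inl hu2def.symm
      have hΔnorm : ‖Δ‖ ≤ Real.exp (t*(L/2 - u2)) * (Real.sqrt M * ((Real.exp (c*t) - 1)/c)) := by
        rw [hΔfac, norm_mul, hβnorm]
        apply mul_le_mul_of_nonneg_left _ (Real.exp_nonneg _)
        have hcb := cexpBound γ (by rw [hγre]; exact hcpos) t ht
        rwa [hγre, hγnorm] at hcb
      have hPj : P j = Real.exp ((L - 2*u2)*t) := by simp only [hPdef, hu2def]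
      have hPjpos : 0 < P j := by rw [hPj]; positivity
      have h1 : ‖Δ‖^2 ≤ P j * (M * ((Real.exp (c*t) - 1)^2/c^2)) := by
        calc ‖Δ‖^2 ≤ (Real.exp (t*(L/2 - u2)) * (Real.sqrt M * ((Real.exp (c*t) - 1)/c)))^2 :=
              pow_le_pow_left₀ (norm_nonneg _) hΔnorm 2
          _ = (Real.exp (t*(L/2 - u2)))^2 * (M * ((Real.exp (c*t) - 1)^2/c^2)) := by
              rw [mul_pow, mul_pow, div_pow, Real.sq_sqrt hMnn]
          _ = P j * (M * ((Real.exp (c*t) - 1)^2/c^2)) := by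
              rw [hPj, pow_two, ← Real.exp_add,
                show t*(L/2 - u2) + t*(L/2 - u2) = (L - 2*u2)*t by ring]
      have h2 : (Real.exp (c*t) - 1)^2/c^2 ≤ (T - 1)*(Real.exp (2*u2*t) - 1)/(2*u2*L) := by
        rw [div_le_div_iff₀ (by positivity) (by positivity)]
        have hcs := csExp hL (mul_pos two_pos hu2) ht
        have hcc : (L + 2*u2)/2 = c := by rw [hcdef]; ring
        rw [hcc] at hcs
        calc (Real.exp (c*t) - 1)^2*(2*u2*L) = L*(2*u2)*(Real.exp (c*t) - 1)^2 := by ring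
          _ ≤ c^2*((Real.exp (L*t) - 1)*(Real.exp (2*u2*t) - 1)) := hcs
          _ = (T - 1)*(Real.exp (2*u2*t) - 1)*c^2 := by rw [← hTdef]; ring
      have hTPnn : 0 ≤ T - P j := by
        rw [sub_nonneg, hPj, hTdef]
        apply Real.exp_le_exp.mpr
        apply mul_le_mul_of_nonneg_right (by linarith) ht
      have hTP : T - P j = P j * (Real.exp (2*u2*t) - 1) := by
        rw [hPj, hTdef, mul_sub, mul_one, ← Real.exp_add,
          show (L - 2*u2)*t + 2*u2*t = L*t by ring]
      have hDneq : ‖(lam:ℂ) - (Real.sqrt lam : ℂ) * d j‖ = Dn := by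
        rw [hβexp j]
      have hτB : τ * B j = (T - 1)*(M*α^2)/((2*u2*L)*Dn^2) := by
        simp only [hτdef, hBdef, hDneq, ← hu2def, ← hv2def, ← hαdef]
        rw [show (L/2 + u2)^2 + v2^2 = M by rw [hMdef, hcdef]]
        field_simp
      have hκn : ‖κ j‖ = 2*α/Dn := by
        simp only [hκdef]
        rw [norm_div, norm_mul, norm_mul]
        simp [Complex.norm_I, Complex.norm_conj, ← hαdef, ← hDndef]
      have hdisc : (‖κ j‖*‖Δ‖)^2 ≤ 4*(T - P j)*(τ*B j) := by
        rw [hκn, hτB, hTP]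
        calc (2*α/Dn*‖Δ‖)^2 = 4*α^2/Dn^2*‖Δ‖^2 := by rw [mul_pow, div_pow]; ring
          _ ≤ 4*α^2/Dn^2*(P j*(M*((T - 1)*(Real.exp (2*u2*t) - 1)/(2*u2*L)))) := by
              apply mul_le_mul_of_nonneg_left _ (by positivity)
              refine h1.trans ?_
              apply mul_le_mul_of_nonneg_left _ hPjpos.le
              exact mul_le_mul_of_nonneg_left h2 hMnn
          _ = 4*(P j*(Real.exp (2*u2*t) - 1))*((T - 1)*(M*α^2)/((2*u2*L)*Dn^2)) := by
              field_simp
      have him : -(‖κ j‖*‖Δ‖*X) ≤ (κ j * Δ * x.2.2.2 j).im := by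
        have h := Complex.abs_im_le_norm (κ j * Δ * x.2.2.2 j)
        have hn : ‖κ j * Δ * x.2.2.2 j‖ = ‖κ j‖*‖Δ‖*X := by
          rw [norm_mul, norm_mul]
        rw [hn] at h
        have := neg_abs_le ((κ j * Δ * x.2.2.2 j).im)
        linarith [abs_nonneg ((κ j * Δ * x.2.2.2 j).im)]
      have hquad := quadNN hTPnn (mul_nonneg (norm_nonneg _) (norm_nonneg _))
        (norm_nonneg (x.2.2.2 j)) (mul_nonneg hτnn (hBnn j)) hdisc
      have hexpand : (T - P j)*X^2 - ‖κ j‖*‖Δ‖*X + τ*B j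
          = (T*X^2 - P j*X^2) - ‖κ j‖*‖Δ‖*X + τ*B j := by ring
      rw [hexpand] at hquad
      linarith
    -- assemble
    have hsum1 : (∑ j, κ j * (Complex.exp ((t:ℂ)*(L:ℂ)) - Complex.exp ((t:ℂ)*β j))
        * x.2.2.2 j).im = ∑ j, (κ j * (Complex.exp ((t:ℂ)*(L:ℂ))
        - Complex.exp ((t:ℂ)*β j)) * x.2.2.2 j).im := by
      exact Complex.im_sum _ _
    have hbig : ∑ j, P j * ‖x.2.2.2 j‖^2 ≤ T * enormSq x.2.2.2
        + (∑ j, κ j * (Complex.exp ((t:ℂ)*(L:ℂ)) - Complex.exp ((t:ℂ)*β j)) * x.2.2.2 j).im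
        + τ * b.im := by
      have h1 : ∑ j, P j * ‖x.2.2.2 j‖^2 ≤ ∑ j, (T * ‖x.2.2.2 j‖^2
          + (κ j * (Complex.exp ((t:ℂ)*(L:ℂ)) - Complex.exp ((t:ℂ)*β j)) * x.2.2.2 j).im
          + τ * B j) := Finset.sum_le_sum (fun j _ => claim j)
      have h2 : τ * (∑ j, B j) ≤ τ * b.im := by
        apply mul_le_mul_of_nonneg_left _ hτnn
        exact hb
      rw [Finset.sum_add_distrib, Finset.sum_add_distrib, ← Finset.mul_sum,
        ← Finset.mul_sum, ← hsum1] at h1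
      rw [enormSq]
      linarith
    -- imaginary part of the first component
    have him1 : (Complex.exp ((t:ℂ)*(L:ℂ)) * x.1
        + (∑ j, κ j * (Complex.exp ((t:ℂ)*(L:ℂ)) - Complex.exp ((t:ℂ)*β j)) * x.2.2.2 j)
        + b * (Complex.exp ((t:ℂ)*(L:ℂ)) - 1) / ((lam:ℂ) - 1)).im
        = T * x.1.im
          + (∑ j, κ j * (Complex.exp ((t:ℂ)*(L:ℂ)) - Complex.exp ((t:ℂ)*β j)) * x.2.2.2 j).im
          + τ * b.im := by
      rw [Complex.add_im, Complex.add_im, hTc]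
      congr 1
      · congr 1
        simp [Complex.mul_im]
      · have : b * (((T:ℝ):ℂ) - 1) / ((lam:ℂ) - 1) = b * ((τ:ℝ):ℂ) := by
          rw [hτdef]
          push_cast
          rw [mul_div_assoc]
        rw [this]
        simp [Complex.mul_im, mul_comm]
    rw [him1, hnu, hnv]
    have hw : enormSq (fun j => Complex.exp ((t:ℂ)*β j) * x.2.2.2 j)
        = ∑ j, P j * ‖x.2.2.2 j‖^2 := by
      rw [enormSq]
      exact Finset.sum_congr rfl (fun j _ => hnw j)
    rw [hw]
    have hord : T * (enormSq x.2.1 + enormSq x.2.2.1 + enormSq x.2.2.2) < T * x.1.im :=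
      mul_lt_mul_of_pos_left hx hTpos
    nlinarith [hbig, hord]
  · -- Differentiable
    intro t _
    apply Differentiable.differentiableOn
    rw [hφdef]
    fun_prop
  · -- φ 0 = id
    intro z _
    simp [hφdef]
  · -- semigroup law
    intro s _ t _ z _
    have hexpadd : ∀ c : ℂ, Complex.exp (((s+t:ℝ):ℂ)*c)
        = Complex.exp ((s:ℂ)*c) * Complex.exp ((t:ℂ)*c) := by
      intro c
      rw [← Complex.exp_add]
      congr 1
      push_cast
      ring
    have hlamne : (lam:ℂ) - 1 ≠ 0 := by
      rw [sub_ne_zero]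
      exact_mod_cast hlam.ne'
    simp only [hφdef]
    refine Prod.ext ?_ (Prod.ext ?_ (Prod.ext ?_ ?_))
    · simp only [hexpadd]
      have hs1 : ∑ j, κ j * (Complex.exp ((s:ℂ)*(L:ℂ)) * Complex.exp ((t:ℂ)*(L:ℂ))
            - Complex.exp ((s:ℂ)*β j) * Complex.exp ((t:ℂ)*β j)) * z.2.2.2 j
          = Complex.exp ((s:ℂ)*(L:ℂ)) * (∑ j, κ j * (Complex.exp ((t:ℂ)*(L:ℂ))
            - Complex.exp ((t:ℂ)*β j)) * z.2.2.2 j)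
            + ∑ j, κ j * (Complex.exp ((s:ℂ)*(L:ℂ)) - Complex.exp ((s:ℂ)*β j))
              * (Complex.exp ((t:ℂ)*β j) * z.2.2.2 j) := by
        rw [Finset.mul_sum, ← Finset.sum_add_distrib]
        exact Finset.sum_congr rfl fun j _ => by ring
      rw [hs1]
      field_simp
      ring
    · funext i
      simp only [hexpadd]
      ring
    · funext j
      simp only [hexpadd]
      ring
    · funext j
      simp only [hexpadd]
      ring
  · -- uniform convergence
    intro K _ hK
    have hcont : Continuous (Function.uncurry φ) := by
      rw [hφdef]
      fun_prop
    have h1 : UniformContinuousOn (Function.uncurry φ) ((Icc (0:ℝ) 1) ×ˢ K) :=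
      (isCompact_Icc.prod hK).uniformContinuousOn_of_continuous hcont.continuousOn
    have h2 : TendstoUniformlyOn φ (φ 0) (nhdsWithin 0 (Icc 0 1)) K :=
      h1.tendstoUniformlyOn (by norm_num : (0:ℝ) ∈ Icc (0:ℝ) 1)
    have hle : nhdsWithin (0:ℝ) (Ioi 0) ≤ nhdsWithin 0 (Icc 0 1) := by
      rw [← nhdsWithin_Ioc_eq_nhdsGT (zero_lt_one (α := ℝ))]
      exact nhdsWithin_mono _ Ioc_subset_Icc_self
    have h3 : TendstoUniformlyOn φ (φ 0) (nhdsWithin 0 (Ioi 0)) K :=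
      fun u hu => (h2 u hu).filter_mono hle
    apply h3.congr_right
    intro x _
    simp [hφdef]
  · -- φ 1 = ψ
    intro z _
    rw [hψ]
    have hexp1L : Complex.exp ((L:ℂ)) = (lam:ℂ) := by
      rw [← Complex.ofReal_exp, hexpL]
    have hlamne : (lam:ℂ) - 1 ≠ 0 := by
      rw [sub_ne_zero]
      exact_mod_cast hlam.ne'
    have hsq2 : Complex.exp ((L:ℂ)/2) = ((Real.sqrt lam : ℝ) : ℂ) := by
      rw [hsqrt, Complex.ofReal_exp]
      push_cast
      ring_nf
    simp only [hφdef, Complex.ofReal_one, one_mul, hexp1L]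
    refine Prod.ext ?_ (Prod.ext ?_ (Prod.ext ?_ ?_))
    · simp only []
      have hsum : ∑ j, κ j * ((lam:ℂ) - Complex.exp (β j)) * z.2.2.2 j
          = 2 * Complex.I * herm z.2.2.2 a := by
        rw [herm, Finset.mul_sum]
        refine Finset.sum_congr rfl fun j _ => ?_
        rw [hκdef]
        simp only []
        rw [div_mul_cancel₀ _ (hden j)]
        ring
      rw [hsum, mul_div_assoc, div_self hlamne, mul_one]
    · funext i
      simp only [Pi.smul_apply, smul_eq_mul]
      rw [← hsq2]
    · funext j
      simp only [Pi.smul_apply, smul_eq_mul, Matrix.mulVec_diagonal]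
      have hej : e j ≠ 0 := by
        intro h
        have := he j
        rw [h] at this
        simp at this
      rw [Complex.exp_add, Complex.exp_log hej, ← hsq2]
      ring
    · funext j
      simp only [Pi.smul_apply, smul_eq_mul, Matrix.mulVec_diagonal]
      rw [← hβexp j]
      ring
end
end

section
/- Let λ > 1 be real and a, b ∈ ℂ, and suppose ψ(u₁, u₂) = (λ u₁ + a, u₂ + b) is a self-map of the Siegel half-plane ℍ² = {(u₁, u₂) ∈ ℂ² : Im u₁ > |u₂|²}. If Im(a) ≥ ((λ − 1)/(ln λ)²)·|b|², then ψ can be embedded into a semigroup of holomorphic self-maps of ℍ² (given explicitly by ψ_t(u₁, u₂) = (λ^t u₁ + ((λ^t − 1)/(λ − 1))·a, u₂ + t b)). -/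
open Set Complex Filter

noncomputable section

/-- The Siegel half-plane `ℍ² = {(u₁, u₂) : Im u₁ > |u₂|²}`. -/
def Siegel2 : Set (ℂ × ℂ) := {x | ‖x.2‖ ^ 2 < x.1.im}

lemma cubic_le_exp {x : ℝ} (hx : 0 ≤ x) : 1 + x + x ^ 2 / 2 + x ^ 3 / 6 ≤ Real.exp x := by
  calc 1 + x + x ^ 2 / 2 + x ^ 3 / 6 = ∑ i ∈ Finset.range 4, x ^ i / i.factorial := by
        simp [Finset.sum_range_succ, Nat.factorial]
    _ ≤ Real.exp x := Real.sum_le_exp_of_nonneg hx 4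

lemma key_ineq (x s c : ℝ) (hx : 0 ≤ x) (hs : 0 ≤ s) (hc : 0 ≤ c) :
    (s + x * c) ^ 2 + c ^ 2 ≤ Real.exp x * (s ^ 2 + c ^ 2) := by
  have h := cubic_le_exp hx
  nlinarith [sq_nonneg (s - c), sq_nonneg (s + c), sq_nonneg (x*(s+c) + 3*(s-c)),
    sq_nonneg (x*(s+c) - 3*(s-c)), mul_nonneg hx (sq_nonneg (s - c)),
    mul_nonneg (mul_nonneg hx hx) (sq_nonneg (s-c)), mul_nonneg (mul_nonneg hx hx) hx,
    mul_nonneg hx (sq_nonneg (x*(s+c) + 3*(s-c))), sq_nonneg x, mul_nonneg hs hc,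
    mul_nonneg (mul_nonneg hx hx) (mul_nonneg hs hc)]

/-- Let `λ > 1` and `ψ(u₁, u₂) = (λ u₁ + a, u₂ + b)` be a self-map of `ℍ²`. If
`Im a ≥ ((λ - 1)/(ln λ)²) |b|²`, then `ψ` embeds into a semigroup of holomorphic
self-maps of `ℍ²`, given explicitly by
`ψ_t(u₁, u₂) = (λ^t u₁ + ((λ^t - 1)/(λ - 1)) a, u₂ + t b)`. -/
theorem stmt16 (lam : ℝ) (hlam : 1 < lam) (a b : ℂ)
    (ψ : ℂ × ℂ → ℂ × ℂ) (hψ : ∀ x, ψ x = ((lam : ℂ) * x.1 + a, x.2 + b))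
    (hself : MapsTo ψ Siegel2 Siegel2)
    (ha : a.im ≥ ((lam - 1) / (Real.log lam) ^ 2) * ‖b‖ ^ 2) :
    ∃ φt : ℝ → ℂ × ℂ → ℂ × ℂ,
      IsHolSemigroupOn Siegel2 φt ∧
      (∀ t : ℝ, 0 ≤ t → ∀ x : ℂ × ℂ,
        φt t x = (((lam ^ t : ℝ) : ℂ) * x.1
            + ((((lam ^ t : ℝ) : ℂ) - 1) / ((lam : ℂ) - 1)) * a,
          x.2 + (t : ℂ) * b)) ∧
      (∀ z ∈ Siegel2, φt 1 z = ψ z) := by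
  have hlam0 : (0:ℝ) < lam := lt_trans one_pos hlam
  have hlam1 : (0:ℝ) < lam - 1 := by linarith
  have hL : (0:ℝ) < Real.log lam := Real.log_pos hlam
  have hne : ((lam : ℂ) - 1) ≠ 0 := by
    rw [sub_ne_zero]
    exact_mod_cast hlam.ne'
  set L := Real.log lam with hLdef
  refine ⟨fun t x => (((lam ^ t : ℝ) : ℂ) * x.1
      + ((((lam ^ t : ℝ) : ℂ) - 1) / ((lam : ℂ) - 1)) * a, x.2 + (t : ℂ) * b),
    ⟨?_, ?_, ?_, ?_, ?_⟩, fun t _ x => rfl, ?_⟩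
  · -- MapsTo
    intro t ht x hx
    simp only [Siegel2, mem_setOf_eq] at hx ⊢
    set r := lam ^ t with hrdef
    have hr1 : (1:ℝ) ≤ r := Real.one_le_rpow hlam.le ht
    have hre : r = Real.exp (L * t) := by rw [hrdef, Real.rpow_def_of_pos hlam0]
    have hcoef : (((r:ℂ)) - 1) / ((lam:ℂ) - 1) = (((r - 1)/(lam - 1) : ℝ) : ℂ) := by
      push_cast; ring
    have hre' : ((((r:ℂ)) - 1) / ((lam:ℂ) - 1)).re = (r - 1)/(lam - 1) := by
      rw [hcoef]; exact Complex.ofReal_re _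
    have him0 : ((((r:ℂ)) - 1) / ((lam:ℂ) - 1)).im = 0 := by
      rw [hcoef]; exact Complex.ofReal_im _
    have him : ((r:ℂ) * x.1 + (((r:ℂ)) - 1) / ((lam:ℂ) - 1) * a).im
        = r * x.1.im + ((r - 1)/(lam - 1)) * a.im := by
      rw [Complex.add_im, Complex.mul_im, Complex.mul_im, hre', him0,
        Complex.ofReal_re, Complex.ofReal_im]
      ring
    rw [him]
    have hk := key_ineq (t * L) ‖x.2‖ (‖b‖ / L) (by positivity) (norm_nonneg _)
      (by positivity)
    have ht2 : t * L * (‖b‖ / L) = t * ‖b‖ := by field_simp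
    rw [ht2] at hk
    rw [mul_comm t L, ← hre] at hk
    have h1 : ‖x.2 + (t:ℂ) * b‖ ≤ ‖x.2‖ + t * ‖b‖ := by
      calc ‖x.2 + (t:ℂ) * b‖ ≤ ‖x.2‖ + ‖(t:ℂ) * b‖ := norm_add_le _ _
        _ = ‖x.2‖ + t * ‖b‖ := by
            rw [norm_mul, Complex.norm_real, Real.norm_of_nonneg ht]
    have h1' : ‖x.2 + (t:ℂ) * b‖ ^ 2 ≤ (‖x.2‖ + t * ‖b‖) ^ 2 :=
      pow_le_pow_left₀ (norm_nonneg _) h1 2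
    have ha' : (r - 1) * (‖b‖ / L) ^ 2 ≤ ((r - 1)/(lam - 1)) * a.im := by
      have hco : 0 ≤ (r - 1)/(lam - 1) := div_nonneg (by linarith) hlam1.le
      have := mul_le_mul_of_nonneg_left ha hco
      calc (r - 1) * (‖b‖ / L) ^ 2
          = ((r - 1)/(lam - 1)) * ((lam - 1) / L ^ 2 * ‖b‖ ^ 2) := by
            field_simp
        _ ≤ ((r - 1)/(lam - 1)) * a.im := this
    nlinarith [mul_lt_mul_of_pos_left hx (lt_of_lt_of_le one_pos hr1)]
  · -- Differentiable
    intro t _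
    exact (((differentiable_fst.const_mul _).add_const _).prodMk
      (differentiable_snd.add_const _)).differentiableOn
  · -- identity at 0
    intro z _
    simp [Real.rpow_zero]
  · -- semigroup law
    intro s hs t ht z _
    have hadd : lam ^ (s + t) = lam ^ s * lam ^ t := Real.rpow_add hlam0 s t
    refine Prod.ext ?_ ?_
    · simp only [hadd]
      push_cast
      field_simp
      ring
    · simp only []
      push_cast
      ring
  · -- uniform convergence on compacts
    intro K _ hKc
    obtain ⟨M0, hM0⟩ := hKc.isBounded.exists_norm_le
    set M := max M0 0 with hMdef
    have hM : ∀ x ∈ K, ‖x‖ ≤ M := fun x hx => (hM0 x hx).trans (le_max_left _ _)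
    set C := M + ‖a‖ / (lam - 1) with hCdef
    have hC : 0 ≤ C := by positivity
    rw [Metric.tendstoUniformlyOn_iff]
    intro ε hε
    have hcont : Continuous (fun t : ℝ => (lam ^ t - 1) * C + t * ‖b‖) := by
      have : Continuous (fun t : ℝ => lam ^ t) := by
        have : (fun t : ℝ => lam ^ t) = fun t => Real.exp (Real.log lam * t) := by
          funext t; exact Real.rpow_def_of_pos hlam0 t
        rw [this]; fun_prop
      fun_prop
    have hg : Tendsto (fun t : ℝ => (lam ^ t - 1) * C + t * ‖b‖) (nhdsWithin 0 (Ioi 0)) (nhds 0) := by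
      have h0 : (lam ^ (0:ℝ) - 1) * C + 0 * ‖b‖ = 0 := by simp
      have := hcont.tendsto 0
      rw [h0] at this
      exact this.mono_left nhdsWithin_le_nhds
    filter_upwards [hg.eventually_lt_const hε, self_mem_nhdsWithin] with t hgt htpos x hxK
    have ht : 0 ≤ t := le_of_lt htpos
    set r := lam ^ t with hrdef
    have hr1 : (1:ℝ) ≤ r := Real.one_le_rpow hlam.le ht
    rw [Prod.dist_eq]
    simp only [id_eq]
    have hgt' : (r - 1) * C + t * ‖b‖ < ε := hgt
    refine max_lt ?_ ?_
    · rw [dist_eq_norm]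
      show ‖x.1 - ((r:ℂ) * x.1 + (((r:ℂ)) - 1) / ((lam:ℂ) - 1) * a)‖ < ε
      have : (x.1 - ((r:ℂ) * x.1 + (((r:ℂ)) - 1) / ((lam:ℂ) - 1) * a))
          = -((((r - 1 : ℝ)):ℂ) * x.1 + ((((r - 1)/(lam - 1) : ℝ)):ℂ) * a) := by
        push_cast
        field_simp
        ring
      rw [this, norm_neg]
      calc ‖(((r - 1 : ℝ)):ℂ) * x.1 + ((((r - 1)/(lam - 1) : ℝ)):ℂ) * a‖
          ≤ ‖(((r - 1 : ℝ)):ℂ) * x.1‖ + ‖((((r - 1)/(lam - 1) : ℝ)):ℂ) * a‖ := norm_add_le _ _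
        _ = (r - 1) * ‖x.1‖ + (r - 1)/(lam - 1) * ‖a‖ := by
            rw [norm_mul, norm_mul, Complex.norm_real, Complex.norm_real,
              Real.norm_of_nonneg (by linarith), Real.norm_of_nonneg (div_nonneg (by linarith) hlam1.le)]
        _ ≤ (r - 1) * M + (r - 1)/(lam - 1) * ‖a‖ := by
            have := (norm_fst_le x).trans (hM x hxK)
            nlinarith [norm_nonneg x.1]
        _ = (r - 1) * C := by rw [hCdef]; field_simp
        _ ≤ (r - 1) * C + t * ‖b‖ := by nlinarith [norm_nonneg b]
        _ < ε := hgt'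
    · rw [dist_eq_norm]
      show ‖x.2 - (x.2 + (t:ℂ) * b)‖ < ε
      have : (x.2 - (x.2 + (t:ℂ) * b)) = -((t:ℂ) * b) := by ring
      rw [this, norm_neg, norm_mul, Complex.norm_real, Real.norm_of_nonneg ht]
      calc t * ‖b‖ ≤ (r - 1) * C + t * ‖b‖ := by nlinarith
        _ < ε := hgt'
  · -- time 1 equals ψ
    intro z _
    rw [hψ]
    refine Prod.ext ?_ ?_
    · simp only [Real.rpow_one]
      field_simp
    · simp
end
end

section
/- Define g : (−∞, 0) → ℝ by g(x) = x e^x/(1 − e^x). Then g is concave on (−∞, 0); in particular, for all real x, y < 0 one has g((x + y)/2) ≥ (g(x) + g(y))/2. -/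
open Set

noncomputable section

private lemma phi_deriv (x : ℝ) :
    HasDerivAt (fun x : ℝ => x * (1 + Real.exp x) + 2 - 2 * Real.exp x)
      (1 - Real.exp x + x * Real.exp x) x := by
  have h1 := (((hasDerivAt_id x).fun_mul ((hasDerivAt_const x 1).fun_add (Real.hasDerivAt_exp x))).fun_add
      (hasDerivAt_const x 2)).fun_sub ((Real.hasDerivAt_exp x).const_mul 2)
  simp only [id_eq, zero_add, add_zero, one_mul] at h1
  exact h1.congr_deriv (by ring)

private lemma phi_nonpos {x : ℝ} (hx : x < 0) :
    x * (1 + Real.exp x) + 2 - 2 * Real.exp x ≤ 0 := by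
  set φ : ℝ → ℝ := fun x => x * (1 + Real.exp x) + 2 - 2 * Real.exp x with hφ
  have hmono : StrictMonoOn φ (Iic (0 : ℝ)) := by
    apply strictMonoOn_of_deriv_pos (convex_Iic 0)
    · exact Continuous.continuousOn (by continuity)
    · intro y hy
      rw [interior_Iic] at hy
      rw [(phi_deriv y).deriv]
      have h2 : -y + 1 < Real.exp (-y) := Real.add_one_lt_exp (neg_ne_zero.mpr (ne_of_lt hy))
      have h3 : Real.exp (-y) = (Real.exp y)⁻¹ := Real.exp_neg y
      have h4 : (0:ℝ) < Real.exp y := Real.exp_pos y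
      have h5 : Real.exp y * (1 - y) < 1 := by
        have := mul_lt_mul_of_pos_left h2 h4
        rw [h3, mul_inv_cancel₀ h4.ne'] at this
        nlinarith
      nlinarith
  have := hmono (le_of_lt hx : x ∈ Iic (0:ℝ)) (mem_Iic.mpr le_rfl) hx
  simp [hφ, Real.exp_zero] at this
  linarith [this]

/-- first derivative -/
private lemma g_deriv {x : ℝ} (hx : x < 0) :
    HasDerivAt (fun x => x * Real.exp x / (1 - Real.exp x))
      (Real.exp x * (1 - Real.exp x + x) / (1 - Real.exp x) ^ 2) x := by
  have ht : Real.exp x < 1 := Real.exp_lt_one_iff.mpr hx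
  have hne : 1 - Real.exp x ≠ 0 := by linarith
  have hnum : HasDerivAt (fun x : ℝ => x * Real.exp x)
      (1 * Real.exp x + x * Real.exp x) x :=
    (hasDerivAt_id x).mul (Real.hasDerivAt_exp x)
  have hden : HasDerivAt (fun x : ℝ => 1 - Real.exp x) (-Real.exp x) x := by
    simpa using (hasDerivAt_const x 1).fun_sub (Real.hasDerivAt_exp x)
  have := hnum.div hden hne
  exact this.congr_deriv (by field_simp; ring)

/-- second derivative -/
private lemma g_deriv2 {x : ℝ} (hx : x < 0) :
    HasDerivAt (fun x => Real.exp x * (1 - Real.exp x + x) / (1 - Real.exp x) ^ 2)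
      (Real.exp x * ((1 + Real.exp x) * (1 - Real.exp x + x) + (1 - Real.exp x) ^ 2) /
        (1 - Real.exp x) ^ 3) x := by
  have ht : Real.exp x < 1 := Real.exp_lt_one_iff.mpr hx
  have hne : 1 - Real.exp x ≠ 0 := by linarith
  have hnum : HasDerivAt (fun x : ℝ => Real.exp x * (1 - Real.exp x + x))
      (Real.exp x * (1 - Real.exp x + x) + Real.exp x * (-Real.exp x + 1)) x := by
    have h1 := (Real.hasDerivAt_exp x).mul
      (((hasDerivAt_const x 1).sub (Real.hasDerivAt_exp x)).add (hasDerivAt_id x))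
    simp only [id_eq, zero_sub] at h1
    exact h1
  have hden : HasDerivAt (fun x : ℝ => (1 - Real.exp x) ^ 2)
      (2 * (1 - Real.exp x) ^ 1 * (-Real.exp x)) x := by
    exact (HasDerivAt.fun_pow (by simpa using (hasDerivAt_const x 1).fun_sub (Real.hasDerivAt_exp x)) 2).congr_deriv (by norm_num)
  have hd2 : (1 - Real.exp x) ^ 2 ≠ 0 := pow_ne_zero 2 hne
  have := hnum.div hden hd2
  exact this.congr_deriv (by field_simp; ring)

private lemma g_concave :
    ConcaveOn ℝ (Iio (0 : ℝ)) (fun x => x * Real.exp x / (1 - Real.exp x)) := by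
  apply concaveOn_of_hasDerivWithinAt2_nonpos (convex_Iio 0)
    (f' := fun x => Real.exp x * (1 - Real.exp x + x) / (1 - Real.exp x) ^ 2)
    (f'' := fun x => Real.exp x * ((1 + Real.exp x) * (1 - Real.exp x + x) +
      (1 - Real.exp x) ^ 2) / (1 - Real.exp x) ^ 3)
  · intro y hy
    have hy' : y < 0 := hy
    have ht : Real.exp y < 1 := Real.exp_lt_one_iff.mpr hy'
    have hne : 1 - Real.exp y ≠ 0 := by linarith
    exact (ContinuousAt.continuousWithinAt (ContinuousAt.div (by fun_prop) (by fun_prop) hne))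
  · intro y hy
    rw [interior_Iio] at hy
    exact (g_deriv hy).hasDerivWithinAt
  · intro y hy
    rw [interior_Iio] at hy
    exact (g_deriv2 hy).hasDerivWithinAt
  · intro y hy
    rw [interior_Iio] at hy
    have ht : Real.exp y < 1 := Real.exp_lt_one_iff.mpr hy
    have htpos : (0:ℝ) < Real.exp y := Real.exp_pos y
    have hbr : (1 + Real.exp y) * (1 - Real.exp y + y) + (1 - Real.exp y) ^ 2 ≤ 0 := by
      have := phi_nonpos hy
      nlinarith
    have hd : (0:ℝ) < (1 - Real.exp y) ^ 3 := pow_pos (by linarith) 3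
    exact div_nonpos_of_nonpos_of_nonneg (by nlinarith) hd.le

/-- The function `g(x) = x e^x / (1 - e^x)` is concave on `(-∞, 0)`; in
particular it is midpoint-concave there. -/
theorem stmt19 :
    ConcaveOn ℝ (Iio (0 : ℝ)) (fun x => x * Real.exp x / (1 - Real.exp x)) ∧
    ∀ x y : ℝ, x < 0 → y < 0 →
      ((x + y) / 2) * Real.exp ((x + y) / 2) / (1 - Real.exp ((x + y) / 2)) ≥
        (x * Real.exp x / (1 - Real.exp x) + y * Real.exp y / (1 - Real.exp y)) / 2 := by
  refine ⟨g_concave, fun x y hx hy => ?_⟩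
  have h := g_concave.2 (show x ∈ Iio (0:ℝ) from hx) (show y ∈ Iio (0:ℝ) from hy)
    (by norm_num : (0:ℝ) ≤ 1/2) (by norm_num : (0:ℝ) ≤ 1/2) (by norm_num)
  simp only [smul_eq_mul] at h
  have hxy : (1:ℝ)/2 * x + 1/2 * y = (x + y) / 2 := by ring
  rw [hxy] at h
  linarith
end
end
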